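/- arXiv:2505.16772 — 2 statements merged into one kernel-verified Lean document; each statement's English description precedes it below -/
import Mathlib

section
/- Let k₁ < k₂ be coprime positive integers and r₁, r₂, θ₁, θ₂ ∈ ℝ. The function u(x) = r₁ cos(k₁(x + θ₁)) + r₂ cos(k₂(x + θ₂)) is asymmetric (i.e., there is no a ∈ ℝ with u(2a − x) = u(x) for all x) if and only if r₁ r₂ ≠ 0 and θ₁ − θ₂ ∉ (π/(k₁k₂)) ℤ. -/
open Real

theorem stmt_10 (k₁ k₂ : ℕ) (hk₁ : 0 < k₁) (hk : k₁ < k₂)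
    (hcop : Nat.Coprime k₁ k₂) (r₁ r₂ θ₁ θ₂ : ℝ) :
    (¬ ∃ a : ℝ, ∀ x : ℝ,
        r₁ * cos ((k₁ : ℝ) * ((2 * a - x) + θ₁)) + r₂ * cos ((k₂ : ℝ) * ((2 * a - x) + θ₂))
          = r₁ * cos ((k₁ : ℝ) * (x + θ₁)) + r₂ * cos ((k₂ : ℝ) * (x + θ₂)))
      ↔ (r₁ * r₂ ≠ 0 ∧ ¬ ∃ n : ℤ, θ₁ - θ₂ = (n : ℝ) * (π / ((k₁ : ℝ) * (k₂ : ℝ)))) := by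
  have hk₂ : 0 < k₂ := lt_trans hk₁ hk
  have hk₁R : (0:ℝ) < (k₁:ℝ) := by exact_mod_cast hk₁
  have hk₂R : (0:ℝ) < (k₂:ℝ) := by exact_mod_cast hk₂
  have hkR : (k₁:ℝ) < (k₂:ℝ) := by exact_mod_cast hk
  -- Step A: symmetry about a iff the two coefficient conditions hold
  have stepA : ∀ a : ℝ, (∀ x : ℝ,
        r₁ * cos ((k₁ : ℝ) * ((2 * a - x) + θ₁)) + r₂ * cos ((k₂ : ℝ) * ((2 * a - x) + θ₂))
          = r₁ * cos ((k₁ : ℝ) * (x + θ₁)) + r₂ * cos ((k₂ : ℝ) * (x + θ₂)))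
      ↔ (r₁ * sin ((k₁:ℝ) * (a + θ₁)) = 0 ∧ r₂ * sin ((k₂:ℝ) * (a + θ₂)) = 0) := by
    intro a
    constructor
    · intro h
      have key : ∀ t : ℝ, r₁ * sin ((k₁:ℝ) * (a + θ₁)) * sin ((k₁:ℝ) * t)
          + r₂ * sin ((k₂:ℝ) * (a + θ₂)) * sin ((k₂:ℝ) * t) = 0 := by
        intro t
        have h' := h (a - t)
        rw [show (k₁:ℝ) * ((2 * a - (a - t)) + θ₁) = (k₁:ℝ)*(a+θ₁) + (k₁:ℝ)*t from by ring,
            show (k₂:ℝ) * ((2 * a - (a - t)) + θ₂) = (k₂:ℝ)*(a+θ₂) + (k₂:ℝ)*t from by ring,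
            show (k₁:ℝ) * ((a - t) + θ₁) = (k₁:ℝ)*(a+θ₁) - (k₁:ℝ)*t from by ring,
            show (k₂:ℝ) * ((a - t) + θ₂) = (k₂:ℝ)*(a+θ₂) - (k₂:ℝ)*t from by ring,
            Real.cos_add, Real.cos_add, Real.cos_sub, Real.cos_sub] at h'
        linarith
      have hc₁ : r₁ * sin ((k₁:ℝ) * (a + θ₁)) = 0 := by
        have h1 := key (π / k₂)
        have hz : sin ((k₂:ℝ) * (π / k₂)) = 0 := by
          rw [mul_div_cancel₀ _ (ne_of_gt hk₂R)]; exact Real.sin_pi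
        have hpos : 0 < sin ((k₁:ℝ) * (π / k₂)) := by
          apply Real.sin_pos_of_pos_of_lt_pi
          · positivity
          · calc (k₁:ℝ) * (π / k₂) < (k₂:ℝ) * (π / k₂) := by
                  apply mul_lt_mul_of_pos_right hkR; positivity
              _ = π := by rw [mul_div_cancel₀ _ (ne_of_gt hk₂R)]
        rw [hz, mul_zero, add_zero] at h1
        exact (mul_eq_zero.mp h1).resolve_right (ne_of_gt hpos)
      refine ⟨hc₁, ?_⟩
      have h2 := key (π / (2 * k₂))
      have hone : sin ((k₂:ℝ) * (π / (2 * k₂))) = 1 := by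
        rw [show (k₂:ℝ) * (π / (2 * k₂)) = π / 2 from by field_simp]
        exact Real.sin_pi_div_two
      rw [hc₁, zero_mul, zero_add, hone, mul_one] at h2
      exact h2
    · rintro ⟨h1, h2⟩ x
      rw [show (k₁:ℝ) * ((2 * a - x) + θ₁) = (k₁:ℝ)*(a+θ₁) + (k₁:ℝ)*(a - x) from by ring,
          show (k₂:ℝ) * ((2 * a - x) + θ₂) = (k₂:ℝ)*(a+θ₂) + (k₂:ℝ)*(a - x) from by ring,
          show (k₁:ℝ) * (x + θ₁) = (k₁:ℝ)*(a+θ₁) - (k₁:ℝ)*(a - x) from by ring,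
          show (k₂:ℝ) * (x + θ₂) = (k₂:ℝ)*(a+θ₂) - (k₂:ℝ)*(a - x) from by ring,
          Real.cos_add, Real.cos_add, Real.cos_sub, Real.cos_sub]
      linear_combination (-2 * sin ((k₁:ℝ)*(a-x))) * h1 + (-2 * sin ((k₂:ℝ)*(a-x))) * h2
  -- main equivalence
  have main : (∃ a : ℝ, ∀ x : ℝ,
        r₁ * cos ((k₁ : ℝ) * ((2 * a - x) + θ₁)) + r₂ * cos ((k₂ : ℝ) * ((2 * a - x) + θ₂))
          = r₁ * cos ((k₁ : ℝ) * (x + θ₁)) + r₂ * cos ((k₂ : ℝ) * (x + θ₂)))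
      ↔ (r₁ * r₂ = 0 ∨ ∃ n : ℤ, θ₁ - θ₂ = (n : ℝ) * (π / ((k₁ : ℝ) * (k₂ : ℝ)))) := by
    constructor
    · rintro ⟨a, ha⟩
      obtain ⟨h1, h2⟩ := (stepA a).mp ha
      rcases mul_eq_zero.mp h1 with hr₁ | hs₁
      · exact Or.inl (by rw [hr₁, zero_mul])
      rcases mul_eq_zero.mp h2 with hr₂ | hs₂
      · exact Or.inl (by rw [hr₂, mul_zero])
      obtain ⟨m, hm⟩ := Real.sin_eq_zero_iff.mp hs₁
      obtain ⟨n, hn⟩ := Real.sin_eq_zero_iff.mp hs₂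
      refine Or.inr ⟨m * k₂ - n * k₁, ?_⟩
      have hne₁ : (k₁:ℝ) ≠ 0 := ne_of_gt hk₁R
      have hne₂ : (k₂:ℝ) ≠ 0 := ne_of_gt hk₂R
      field_simp
      push_cast
      linear_combination (k₂:ℝ) * hm.symm - (k₁:ℝ) * hn.symm
    · rintro (hr | ⟨N, hN⟩)
      · rcases mul_eq_zero.mp hr with hr₁ | hr₂
        · refine ⟨-θ₂, (stepA _).mpr ⟨by rw [hr₁, zero_mul], ?_⟩⟩
          rw [show (k₂:ℝ) * (-θ₂ + θ₂) = 0 from by ring, Real.sin_zero, mul_zero]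
        · refine ⟨-θ₁, (stepA _).mpr ⟨?_, by rw [hr₂, zero_mul]⟩⟩
          rw [show (k₁:ℝ) * (-θ₁ + θ₁) = 0 from by ring, Real.sin_zero, mul_zero]
      · -- write N = m*k₂ - n*k₁ using coprimality
        have hco : IsCoprime (k₁:ℤ) (k₂:ℤ) := by
          rw [Int.isCoprime_iff_gcd_eq_one]
          exact_mod_cast hcop
        obtain ⟨u, v, huv⟩ := hco
        set m : ℤ := N * v
        set n : ℤ := -(N * u)
        have hmn : (m : ℤ) * k₂ - n * k₁ = N := by
          simp only [m, n]
          linear_combination N * huv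
        refine ⟨(m : ℝ) * π / k₁ - θ₁, (stepA _).mpr ⟨?_, ?_⟩⟩
        · have : (k₁:ℝ) * ((m : ℝ) * π / k₁ - θ₁ + θ₁) = (m:ℝ) * π := by
            field_simp
            ring
          rw [this]
          rw [mul_comm]
          simp [Real.sin_int_mul_pi]
        · have hNr : ((m:ℝ) * k₂ - (n:ℝ) * k₁) = (N:ℝ) := by exact_mod_cast hmn
          have : (k₂:ℝ) * ((m : ℝ) * π / k₁ - θ₁ + θ₂) = (n:ℝ) * π := by
            have hne₁ : (k₁:ℝ) ≠ 0 := ne_of_gt hk₁R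
            have hne₂ : (k₂:ℝ) ≠ 0 := ne_of_gt hk₂R
            have hN' : (θ₁ - θ₂) * ((k₁:ℝ) * (k₂:ℝ)) = (N:ℝ) * π := by
              rw [hN]; field_simp
            field_simp
            linear_combination π * hNr - hN'
          rw [this, mul_comm]
          simp [Real.sin_int_mul_pi]
  rw [not_congr main, not_or]
end

section
/- Let ω > 0 and g(y) = c₃ cos(ω y) + c₄ sin(ω y). If a nontrivial such g (i.e., c₃² + c₄² ≠ 0) solves a₅ ω (n−1) g^{n−1} · (−c₃ sin(ω y) + c₄ cos(ω y)) − b₄ ω g^m · (−c₃ sin(ω y) + c₄ cos(ω y)) ≡ F(y) where F is a finite trigonometric polynomial containing only frequencies ω, 2ω, 3ω, and if m ≥ 3 and n ≥ 4 with m ≠ n − 1, then a₅ = 0 and b₄ = 0. -/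
open Real

theorem stmt_18 (ω c₃ c₄ a₅ b₄ : ℝ) (hω : 0 < ω) (hnt : c₃ ^ 2 + c₄ ^ 2 ≠ 0)
    (m n : ℕ) (hm : 3 ≤ m) (hn : 4 ≤ n) (hmn : m ≠ n - 1)
    (A B : Fin 4 → ℝ)
    (heq : ∀ y : ℝ,
      a₅ * ω * ((n : ℝ) - 1)
          * (c₃ * cos (ω * y) + c₄ * sin (ω * y)) ^ (n - 1)
          * (-c₃ * sin (ω * y) + c₄ * cos (ω * y))
        - b₄ * ω * (c₃ * cos (ω * y) + c₄ * sin (ω * y)) ^ m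
          * (-c₃ * sin (ω * y) + c₄ * cos (ω * y))
        = (A 1 * cos (ω * y) + B 1 * sin (ω * y))
          + (A 2 * cos (2 * ω * y) + B 2 * sin (2 * ω * y))
          + (A 3 * cos (3 * ω * y) + B 3 * sin (3 * ω * y))) :
    a₅ = 0 ∧ b₄ = 0 := by
  have hω' : ω ≠ 0 := ne_of_gt hω
  -- polar coordinates
  set z : ℂ := ⟨c₃, c₄⟩ with hzdef
  have hz0 : z ≠ 0 := by
    intro h
    apply hnt
    have h3 : c₃ = 0 := by
      have := congrArg Complex.re h; simpa [hzdef] using this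
    have h4 : c₄ = 0 := by
      have := congrArg Complex.im h; simpa [hzdef] using this
    rw [h3, h4]; ring
  set R : ℝ := ‖z‖ with hRdef
  set φ : ℝ := Complex.arg z with hφdef
  have hRpos : 0 < R := by
    rw [hRdef]; exact norm_pos_iff.mpr hz0
  have hRne : R ≠ 0 := ne_of_gt hRpos
  have hc3 : c₃ = R * Real.cos φ := by
    rw [hφdef, Complex.cos_arg hz0]
    field_simp [hRdef]
    show c₃ * ‖z‖ = ‖z‖ * c₃; ring
  have hc4 : c₄ = R * Real.sin φ := by
    rw [hφdef, Complex.sin_arg]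
    field_simp [hRdef]
    show c₄ * ‖z‖ = ‖z‖ * c₄; ring
  have hg : ∀ u : ℝ, c₃ * Real.cos (u + φ) + c₄ * Real.sin (u + φ) = R * Real.cos u := by
    intro u
    rw [hc3, hc4, Real.cos_add, Real.sin_add]
    linear_combination (R * Real.cos u) * (Real.sin_sq_add_cos_sq φ)
  have hg' : ∀ u : ℝ, -c₃ * Real.sin (u + φ) + c₄ * Real.cos (u + φ) = -(R * Real.sin u) := by
    intro u
    rw [hc3, hc4, Real.cos_add, Real.sin_add]
    linear_combination (-(R * Real.sin u)) * (Real.sin_sq_add_cos_sq φ)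
  have heq2 : ∀ t : ℝ,
      a₅ * ω * ((n : ℝ) - 1)
          * (c₃ * cos t + c₄ * sin t) ^ (n - 1)
          * (-c₃ * sin t + c₄ * cos t)
        - b₄ * ω * (c₃ * cos t + c₄ * sin t) ^ m
          * (-c₃ * sin t + c₄ * cos t)
        = (A 1 * cos t + B 1 * sin t)
          + (A 2 * cos (2 * t) + B 2 * sin (2 * t))
          + (A 3 * cos (3 * t) + B 3 * sin (3 * t)) := by
    intro t
    have h := heq (t / ω)
    rw [show ω * (t / ω) = t by field_simp,
        show 2 * ω * (t / ω) = 2 * t by field_simp,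
        show 3 * ω * (t / ω) = 3 * t by field_simp] at h
    exact h
  set α : ℝ := -2 * a₅ * ω * ((n : ℝ) - 1) * R ^ (n - 1) * R with hαdef
  set β : ℝ := 2 * b₄ * ω * R ^ m * R with hβdef
  set γ₀ : ℝ := -2 * A 1 * Real.sin φ + 2 * B 1 * Real.cos φ + 6 * A 3 * Real.sin φ
      - 8 * A 3 * (Real.sin φ) ^ 3 + 6 * B 3 * Real.cos φ - 8 * B 3 * (Real.cos φ) ^ 3 with hγ₀def
  set γ₁ : ℝ := -8 * A 2 * Real.sin φ * Real.cos φ + 4 * B 2 * (Real.cos φ) ^ 2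
      - 4 * B 2 * (Real.sin φ) ^ 2 with hγ₁def
  set γ₂ : ℝ := -24 * A 3 * Real.sin φ * (Real.cos φ) ^ 2 + 8 * A 3 * (Real.sin φ) ^ 3
      - 24 * B 3 * Real.cos φ * (Real.sin φ) ^ 2 + 8 * B 3 * (Real.cos φ) ^ 3 with hγ₂def
  have claim : ∀ θ : ℝ, Real.sin θ *
      (α * (Real.cos θ) ^ (n - 1) + β * (Real.cos θ) ^ m - γ₀ - γ₁ * Real.cos θ
        - γ₂ * (Real.cos θ) ^ 2) = 0 := by
    intro θ
    have h1 := heq2 (θ + φ)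
    have h2 := heq2 (-θ + φ)
    rw [hg θ, hg' θ] at h1
    rw [hg (-θ), hg' (-θ)] at h2
    simp only [Real.cos_two_mul, Real.sin_two_mul, Real.cos_three_mul, Real.sin_three_mul,
      Real.cos_add, Real.sin_add, Real.cos_neg, Real.sin_neg, mul_pow] at h1 h2
    rw [hαdef, hβdef, hγ₀def, hγ₁def, hγ₂def]
    linear_combination h1 - h2 +
      (Real.sin θ * (-8 * A 3 * (Real.sin φ) ^ 3 - 8 * B 3 * (Real.cos φ) ^ 3)) *
        (Real.sin_sq_add_cos_sq θ)
  have hroot : ∀ x ∈ Set.Ioo (-1 : ℝ) 1,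
      α * x ^ (n - 1) + β * x ^ m - γ₀ - γ₁ * x - γ₂ * x ^ 2 = 0 := by
    rintro x ⟨hx1, hx2⟩
    have hs : Real.sin (Real.arccos x) = Real.sqrt (1 - x ^ 2) := Real.sin_arccos x
    have hspos : 0 < Real.sqrt (1 - x ^ 2) := Real.sqrt_pos.mpr (by nlinarith)
    have hc := Real.cos_arccos (le_of_lt hx1) (le_of_lt hx2)
    have h := claim (Real.arccos x)
    rw [hc, hs] at h
    rcases mul_eq_zero.mp h with h' | h'
    · exact absurd h' (ne_of_gt hspos)
    · exact h'
  set P : Polynomial ℝ := Polynomial.C α * Polynomial.X ^ (n - 1)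
      + Polynomial.C β * Polynomial.X ^ m + Polynomial.C (-γ₀)
      + Polynomial.C (-γ₁) * Polynomial.X + Polynomial.C (-γ₂) * Polynomial.X ^ 2 with hPdef
  have hP0 : P = 0 := by
    apply Polynomial.eq_zero_of_infinite_isRoot
    apply Set.Infinite.mono _ (Set.Ioo_infinite (by norm_num : (-1:ℝ) < 1))
    intro x hx
    have := hroot x hx
    simp only [Set.mem_setOf_eq, Polynomial.IsRoot, hPdef]
    simp [Polynomial.eval_add, Polynomial.eval_mul]
    linarith [this]
  have hn1m : ¬(n - 1 = m) := fun h => hmn h.symm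
  have hn1 : n - 1 ≠ 0 := by omega
  have hn2 : n - 1 ≠ 1 := by omega
  have hn3 : n - 1 ≠ 2 := by omega
  have hm0 : m ≠ 0 := by omega
  have hm1 : m ≠ 1 := by omega
  have hm2 : m ≠ 2 := by omega
  have hmn1 : ¬(m = n - 1) := hmn
  have hα0 : α = 0 := by
    have h := congrArg (fun Q => Polynomial.coeff Q (n - 1)) hP0
    simp [hPdef, Polynomial.coeff_X_pow, Polynomial.coeff_C, Polynomial.coeff_X,
      hn1m, hn1, hn2, hn3, (show ¬(1 = n - 1) by omega)] at h
    exact h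
  have hβ0 : β = 0 := by
    have h := congrArg (fun Q => Polynomial.coeff Q m) hP0
    simp [hPdef, Polynomial.coeff_X_pow, Polynomial.coeff_C, Polynomial.coeff_X,
      hmn1, hm0, hm1, hm2, (show ¬(1 = m) by omega)] at h
    exact h
  have h4n : (4 : ℝ) ≤ (n : ℝ) := by exact_mod_cast hn
  have hprod : (0:ℝ) < 2 * ω * ((n : ℝ) - 1) * R ^ (n - 1) * R := by
    have h1 : (0:ℝ) < 2 * ω := by linarith
    have h2 : (0:ℝ) < (n : ℝ) - 1 := by linarith
    exact mul_pos (mul_pos (mul_pos h1 h2) (pow_pos hRpos _)) hRpos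
  constructor
  · rw [hαdef] at hα0
    have key : a₅ * (2 * ω * ((n : ℝ) - 1) * R ^ (n - 1) * R) = 0 := by linarith [hα0]
    rcases mul_eq_zero.mp key with h | h
    · exact h
    · exact absurd h (ne_of_gt hprod)
  · rw [hβdef] at hβ0
    have hprod2 : (0:ℝ) < 2 * ω * R ^ m * R := by
      have h1 : (0:ℝ) < 2 * ω := by linarith
      exact mul_pos (mul_pos h1 (pow_pos hRpos _)) hRpos
    have key : b₄ * (2 * ω * R ^ m * R) = 0 := by linarith [hβ0]
    rcases mul_eq_zero.mp key with h | h
    · exact h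
    · exact absurd h (ne_of_gt hprod2)
end
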